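/- Let p be an odd prime. The group M(p) has exactly p^2 - 1 conjugacy classes c such that c is disjoint from the Frattini subgroup of M(p) and c is closed under taking (p+1)-th powers, i.e., for every x ∈ c the element x^{p+1} is conjugate to x. -/

import Mathlib

/-!
For an odd prime `p`, the modular group `M(p)` of order `p^3` is the semidirect product
`ZMod (p^2) ⋊ ZMod p`, where the generator of `ZMod p` acts on `ZMod (p^2)` by
multiplication by the unit `1 + p`.
-/

namespace ModularP

/-- The unit `1 + p` of `ZMod (p^2)`. -/
def u (p : ℕ) : (ZMod (p ^ 2))ˣ :=
  ZMod.unitOfCoprime (1 + p) (by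
    simpa [Nat.add_comm] using (Nat.coprime_succ_self p).pow_right 2)

lemma pmul (p : ℕ) : ((p : ZMod (p ^ 2)) * p) = 0 := by
  have h : (((p * p : ℕ)) : ZMod (p ^ 2)) = 0 := by
    rw [← pow_two]; exact ZMod.natCast_self _
  push_cast at h
  exact h

lemma one_add_sq_zero_pow {R : Type*} [CommRing R] (x : R) (hx : x * x = 0) (n : ℕ) :
    (1 + x) ^ n = 1 + (n : R) * x := by
  induction n with
  | zero => simp
  | succ n ih =>
      have key : (1 + (n : R) * x) * (1 + x) = 1 + ((n : R) + 1) * x + (n : R) * (x * x) := by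
        ring
      rw [pow_succ, ih, key, hx, mul_zero, add_zero]
      push_cast
      ring

/-- The unit `1 + p` has multiplicative order dividing `p` in `(ZMod (p^2))ˣ`. -/
lemma u_pow (p : ℕ) : u p ^ p = 1 := by
  ext
  have hc : (u p : ZMod (p ^ 2)) = 1 + p := by simp [u]
  rw [Units.val_pow_eq_pow_val, hc, one_add_sq_zero_pow _ (pmul p), pmul, add_zero,
    Units.val_one]

/-- Units of `ZMod n` acting as multiplicative automorphisms of `Multiplicative (ZMod n)`. -/
def unitsToMulAut (n : ℕ) : (ZMod n)ˣ →* MulAut (Multiplicative (ZMod n)) where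
  toFun c := AddEquiv.toMultiplicative (DistribMulAction.toAddAut (ZMod n)ˣ (ZMod n) c)
  map_one' := by ext x; simp
  map_mul' c d := by ext x; simp [mul_smul]

/-- The action of `ZMod p` on `ZMod (p^2)` in which `k` acts by multiplication
by `(1+p)^k`. -/
def actionHom (p : ℕ) : Multiplicative (ZMod p) →* MulAut (Multiplicative (ZMod (p ^ 2))) :=
  AddMonoidHom.toMultiplicativeLeft
    (ZMod.lift p ⟨zmultiplesHom _ (Additive.ofMul (unitsToMulAut (p ^ 2) (u p))), by
      show (p : ℤ) • Additive.ofMul (unitsToMulAut (p ^ 2) (u p)) = 0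
      rw [← ofMul_zpow, zpow_natCast, ← map_pow, u_pow, map_one]
      rfl⟩)

/-- The modular group `M(p)` of order `p^3`:  the semidirect product
`(ZMod (p^2)) ⋊ (ZMod p)` where the generator of `ZMod p` acts on `ZMod (p^2)` by
multiplication by `1 + p`; equivalently `⟨a, b | a^(p^2) = 1, b^p = 1, b a b⁻¹ = a^(1+p)⟩`. -/
abbrev M (p : ℕ) : Type :=
  SemidirectProduct (Multiplicative (ZMod (p ^ 2))) (Multiplicative (ZMod p)) (actionHom p)

end ModularP


namespace ModularP

open scoped commutatorElement

-- NEW MATERIAL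
variable (p : ℕ)

/-- canonical element constructor -/
def e (a : ZMod (p ^ 2)) (b : ZMod p) : M p :=
  ⟨Multiplicative.ofAdd a, Multiplicative.ofAdd b⟩

lemma e_decomp (g : M p) : g = e p (Multiplicative.toAdd g.left) (Multiplicative.toAdd g.right) :=
  rfl

lemma e_inj {a a' : ZMod (p ^ 2)} {b b' : ZMod p} (h : e p a b = e p a' b') :
    a = a' ∧ b = b' := by
  rcases h with ⟨⟩
  exact ⟨rfl, rfl⟩

lemma toMult''_apply {α β : Type*} [AddZeroClass α] [MulOneClass β] (F : α →+ Additive β)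
    (x : α) :
    AddMonoidHom.toMultiplicativeLeft F (Multiplicative.ofAdd x) = Additive.toMul (F x) := rfl

lemma act (b : ZMod p) (x : Multiplicative (ZMod (p ^ 2))) [NeZero p] :
    actionHom p (Multiplicative.ofAdd b) x
      = Multiplicative.ofAdd (((1 + p : ZMod (p ^ 2)) ^ b.val) * Multiplicative.toAdd x) := by
  have hb : ((b.val : ℤ) : ZMod p) = b := by
    push_cast
    simp [ZMod.natCast_val, ZMod.cast_id]
  have h1 : actionHom p (Multiplicative.ofAdd b)
      = unitsToMulAut (p ^ 2) (u p ^ (b.val : ℤ)) := by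
    conv_lhs => rw [← hb]
    unfold actionHom
    rw [toMult''_apply, ZMod.lift_coe]
    show Additive.toMul ((b.val : ℤ) • Additive.ofMul (unitsToMulAut (p ^ 2) (u p))) = _
    rw [← ofMul_zpow, toMul_ofMul, map_zpow]
  rw [h1]
  show Multiplicative.ofAdd ((u p ^ (b.val : ℤ)) • Multiplicative.toAdd x) = _
  congr 1
  rw [zpow_natCast]
  rw [Units.smul_def]
  congr 1
  rw [Units.val_pow_eq_pow_val]
  congr 1
  simp [u]

lemma e_mul [NeZero p] (a₁ a₂ : ZMod (p ^ 2)) (b₁ b₂ : ZMod p) :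
    e p a₁ b₁ * e p a₂ b₂ = e p (a₁ + (1 + p : ZMod (p ^ 2)) ^ b₁.val * a₂) (b₁ + b₂) := by
  unfold e
  ext
  · show Multiplicative.toAdd (Multiplicative.ofAdd a₁ * actionHom p (Multiplicative.ofAdd b₁)
      (Multiplicative.ofAdd a₂)) = _
    rw [act]
    rfl
  · rfl


instance instNeZeroPSq (p : ℕ) [NeZero p] : NeZero (p ^ 2) := ⟨pow_ne_zero 2 (NeZero.ne p)⟩

/-- reduction mod `p`. -/
def ψ : ZMod (p ^ 2) →+* ZMod p := ZMod.castHom (dvd_pow_self p two_ne_zero) (ZMod p)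

variable [NeZero p]

lemma psi_natCast (n : ℕ) : ψ p (n : ZMod (p ^ 2)) = (n : ZMod p) := map_natCast _ n

lemma psi_apply (x : ZMod (p ^ 2)) : ψ p x = ((x.val : ℕ) : ZMod p) := by
  conv_lhs => rw [show x = ((x.val : ℕ) : ZMod (p ^ 2)) by simp [ZMod.natCast_val, ZMod.cast_id]]
  rw [psi_natCast]

lemma p_mul_psi (x : ZMod (p ^ 2)) :
    (p : ZMod (p ^ 2)) * (((ψ p x).val : ℕ) : ZMod (p ^ 2)) = p * x := by
  have hx : x = ((x.val : ℕ) : ZMod (p ^ 2)) := by simp [ZMod.natCast_val, ZMod.cast_id]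
  have hval : (ψ p x).val = x.val % p := by rw [psi_apply, ZMod.val_natCast]
  rw [hval]
  conv_rhs => rw [hx]
  conv_rhs => rw [show x.val = p * (x.val / p) + x.val % p from (Nat.div_add_mod _ _).symm]
  push_cast
  rw [mul_add, ← mul_assoc, pmul, zero_mul, zero_add]

lemma p_mul_eq_of_psi_eq {x y : ZMod (p ^ 2)} (h : ψ p x = ψ p y) :
    (p : ZMod (p ^ 2)) * x = p * y := by
  rw [← p_mul_psi p x, ← p_mul_psi p y, h]

lemma psi_one_add_p : ψ p (1 + p : ZMod (p ^ 2)) = 1 := by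
  rw [map_add, map_one, psi_natCast, ZMod.natCast_self, add_zero]

lemma e_eq {a a' : ZMod (p ^ 2)} {b b' : ZMod p} (h1 : a = a') (h2 : b = b') :
    e p a b = e p a' b' := by rw [h1, h2]

lemma conj_e (a c : ZMod (p ^ 2)) (b d : ZMod p) :
    (e p c d) * (e p a b) * (e p c d)⁻¹
      = e p (a + p * ((d.val : ZMod (p ^ 2)) * a - (b.val : ZMod (p ^ 2)) * c)) b := by
  rw [mul_inv_eq_iff_eq_mul, e_mul, e_mul, one_add_sq_zero_pow _ (pmul p),
    one_add_sq_zero_pow _ (pmul p)]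
  exact e_eq p (by ring) (add_comm _ _)

lemma nmul_pa (m₁ m₂ : ℕ) (h : (m₁ : ZMod p) = (m₂ : ZMod p)) (a : ZMod (p ^ 2)) :
    (m₁ : ZMod (p ^ 2)) * ((p : ZMod (p ^ 2)) * a) = (m₂ : ZMod (p ^ 2)) * ((p : ZMod (p ^ 2)) * a) := by
  have : (p : ZMod (p ^ 2)) * (m₁ : ZMod (p ^ 2)) = p * (m₂ : ZMod (p ^ 2)) :=
    p_mul_eq_of_psi_eq p (by rw [psi_natCast, psi_natCast, h])
  calc (m₁ : ZMod (p ^ 2)) * ((p : ZMod (p ^ 2)) * a)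
      = ((p : ZMod (p ^ 2)) * (m₁ : ZMod (p ^ 2))) * a := by ring
    _ = ((p : ZMod (p ^ 2)) * (m₂ : ZMod (p ^ 2))) * a := by rw [this]
    _ = (m₂ : ZMod (p ^ 2)) * ((p : ZMod (p ^ 2)) * a) := by ring

lemma pow_e (a : ZMod (p ^ 2)) (b : ZMod p) (n : ℕ) :
    (e p a b) ^ n
      = e p ((n : ZMod (p ^ 2)) * a
          + ((n.choose 2 * b.val : ℕ) : ZMod (p ^ 2)) * ((p : ZMod (p ^ 2)) * a))
          ((n : ZMod p) * b) := by
  induction n with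
  | zero =>
      apply Eq.symm
      show e p _ _ = 1
      rw [show (1 : M p) = e p 0 0 from rfl]
      exact e_eq p (by simp) (by simp)
  | succ n ih =>
      rw [pow_succ, ih, e_mul, one_add_sq_zero_pow _ (pmul p)]
      have hcast : ((((n : ZMod p) * b).val : ℕ) : ZMod p) = ((n * b.val : ℕ) : ZMod p) := by
        push_cast
        simp [ZMod.natCast_val, ZMod.cast_id]
      have key := nmul_pa p _ _ hcast a
      apply e_eq
      · rw [Nat.choose_succ_succ, Nat.choose_one_right]
        push_cast at key ⊢
        linear_combination key
      · push_cast
        ring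

lemma pow_p_add_one (hp : p.Prime) (hodd : Odd p) (a : ZMod (p ^ 2)) (b : ZMod p) :
    (e p a b) ^ (p + 1) = e p (a + p * a) b := by
  have h2 : 2 ∣ p + 1 := by
    obtain ⟨k, hk⟩ := hodd
    exact ⟨k + 1, by omega⟩
  have hdvd : p ∣ (p + 1).choose 2 := by
    rw [Nat.choose_two_right]
    simp only [Nat.add_sub_cancel]
    rw [mul_comm, Nat.mul_div_assoc p h2]
    exact dvd_mul_right _ _
  rw [pow_e]
  apply e_eq
  · have h0 : (((p + 1).choose 2 * b.val : ℕ) : ZMod p) = ((0 : ℕ) : ZMod p) := by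
      rcases hdvd with ⟨t, ht⟩
      rw [ht]
      push_cast
      simp [ZMod.natCast_self]
    rw [nmul_pa p _ _ h0 a]
    push_cast
    ring
  · push_cast
    simp

lemma isConj_pow_p_add_one (hp : p.Prime) (hodd : Odd p) (g : M p) : IsConj g (g ^ (p + 1)) := by
  rw [e_decomp p g]
  set a := Multiplicative.toAdd g.left
  set b := Multiplicative.toAdd g.right
  rw [pow_p_add_one p hp hodd]
  rw [isConj_iff]
  refine ⟨e p 0 1, ?_⟩
  rw [conj_e]
  apply e_eq p _ rfl
  rw [ZMod.val_one_eq_one_mod]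
  rw [Nat.mod_eq_of_lt hp.one_lt]
  push_cast
  ring


/-- The mod-`p` reduction of the left component, as a group hom. -/
def pi1 : M p →* Multiplicative (ZMod p) where
  toFun g := Multiplicative.ofAdd (ψ p (Multiplicative.toAdd g.left))
  map_one' := by
    show Multiplicative.ofAdd (ψ p (Multiplicative.toAdd (1 : Multiplicative (ZMod (p ^ 2))))) = 1
    simp
  map_mul' g h := by
    show Multiplicative.ofAdd (ψ p (Multiplicative.toAdd
        (g.left * actionHom p g.right h.left))) = _
    have hact := act p (Multiplicative.toAdd g.right) h.left
    rw [show g.right = Multiplicative.ofAdd (Multiplicative.toAdd g.right) from rfl, hact]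
    show Multiplicative.ofAdd (ψ p (Multiplicative.toAdd g.left
      + (1 + p : ZMod (p ^ 2)) ^ (Multiplicative.toAdd g.right).val * Multiplicative.toAdd h.left))
      = _
    rw [map_add, map_mul, map_pow, psi_one_add_p, one_pow, one_mul]
    rfl

lemma pi1_e (a : ZMod (p ^ 2)) (b : ZMod p) :
    pi1 p (e p a b) = Multiplicative.ofAdd (ψ p a) := rfl

lemma rightHom_e (a : ZMod (p ^ 2)) (b : ZMod p) :
    SemidirectProduct.rightHom (e p a b) = Multiplicative.ofAdd b := rfl

lemma pi1_surjective : Function.Surjective (pi1 p) := by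
  intro t
  refine ⟨e p ((t.toAdd.val : ℕ) : ZMod (p ^ 2)) 0, ?_⟩
  rw [pi1_e, psi_natCast]
  simp [ZMod.natCast_val, ZMod.cast_id]

lemma hom_eq_of_isConj {G A : Type*} [Group G] [CommGroup A] (f : G →* A) {g g' : G}
    (h : IsConj g g') : f g = f g' := by
  obtain ⟨c, hc⟩ := h
  have := congrArg f hc.eq
  rw [map_mul, map_mul, mul_comm (f g') _] at this
  exact mul_left_cancel this

lemma isCoatom_of_index_prime {G : Type*} [Group G] {H : Subgroup G} {q : ℕ} (hq : q.Prime)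
    (h : H.index = q) : IsCoatom H := by
  constructor
  · intro htop
    rw [htop, Subgroup.index_top] at h
    exact hq.one_lt.ne h
  · intro K hK
    have hdvd : K.index ∣ q := h ▸ Subgroup.index_dvd_of_le hK.le
    rcases (Nat.Prime.eq_one_or_self_of_dvd hq _ hdvd) with h1 | h1
    · exact Subgroup.index_eq_one.mp h1
    · exfalso
      have := Subgroup.relIndex_mul_index hK.le
      rw [h1, h] at this
      have hrel : H.relIndex K = 1 :=
        mul_right_cancel₀ hq.pos.ne' (by rw [this, one_mul])
      exact hK.ne' (le_antisymm (Subgroup.relIndex_eq_one.mp hrel) hK.le)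


/-- the central element `a^p`. -/
def z : M p := e p (p : ZMod (p ^ 2)) 0

lemma z_comm (g : M p) : z p * g = g * z p := by
  conv_lhs => rw [e_decomp p g]
  conv_rhs => rw [e_decomp p g]
  show e p _ _ * e p _ _ = e p _ _ * e p _ _
  rw [e_mul, e_mul, one_add_sq_zero_pow _ (pmul p), one_add_sq_zero_pow _ (pmul p)]
  apply e_eq
  · rw [ZMod.val_zero]
    push_cast
    linear_combination (-(((Multiplicative.toAdd g.right).val : ZMod (p ^ 2)))) * pmul p
  · ring

lemma z_pow (m : ℕ) : (z p) ^ m = e p ((m : ZMod (p ^ 2)) * p) 0 := by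
  rw [z, pow_e]
  apply e_eq
  · rw [ZMod.val_zero, Nat.mul_zero, Nat.cast_zero, zero_mul, add_zero]
  · ring

lemma comm_mul_central {G : Type*} [Group G] {z w : G} (hz : ∀ g, z * g = g * z)
    (hw : ∀ g, w * g = g * w) (a b : G) : ⁅a * z, b * w⁆ = ⁅a, b⁆ := by
  have key1 : z * (b * w) * z⁻¹ = b * w := by rw [hz (b * w)]; group
  have key2 : w * a⁻¹ * w⁻¹ = a⁻¹ := by rw [hw a⁻¹]; group
  calc ⁅a * z, b * w⁆
      = a * (z * (b * w) * z⁻¹) * a⁻¹ * (w⁻¹ * b⁻¹) := by group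
    _ = a * (b * w) * a⁻¹ * (w⁻¹ * b⁻¹) := by rw [key1]
    _ = a * b * (w * a⁻¹ * w⁻¹) * b⁻¹ := by group
    _ = a * b * a⁻¹ * b⁻¹ := by rw [key2]
    _ = ⁅a, b⁆ := by group

lemma z_eq_commutator (hp : 1 < p) : z p = ⁅e p 0 1, e p (1 : ZMod (p ^ 2)) 0⁆ := by
  have hinv : (e p (1 : ZMod (p ^ 2)) 0)⁻¹ = e p (-1 : ZMod (p ^ 2)) 0 := by
    apply inv_eq_of_mul_eq_one_right
    rw [e_mul]
    show e p _ _ = e p 0 0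
    apply e_eq <;> simp
  rw [commutatorElement_def, conj_e, hinv, e_mul]
  apply Eq.symm
  apply e_eq
  · rw [ZMod.val_one_eq_one_mod, Nat.mod_eq_of_lt hp, ZMod.val_zero]
    push_cast
    ring
  · ring

lemma z_mem_coatom (hp : 1 < p) {H : Subgroup (M p)} (hH : IsCoatom H) : z p ∈ H := by
  by_contra hz
  have hlt : H < H ⊔ Subgroup.zpowers (z p) := by
    refine lt_of_le_of_ne le_sup_left fun he => hz ?_
    rw [he]
    exact Subgroup.mem_sup_right (Subgroup.mem_zpowers (z p))
  have htop := hH.2 _ hlt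
  haveI : (Subgroup.zpowers (z p)).Normal := by
    constructor
    intro n hn g
    obtain ⟨k, rfl⟩ := Subgroup.mem_zpowers_iff.mp hn
    have hcomm : z p ^ k * g = g * z p ^ k := (Commute.zpow_left (z_comm p g) k).eq
    have : g * z p ^ k * g⁻¹ = z p ^ k := by rw [← hcomm]; group
    rw [this]
    exact Subgroup.mem_zpowers_iff.mpr ⟨k, rfl⟩
  have hmem : ∀ x : M p, ∃ h ∈ H, ∃ k : ℤ, h * z p ^ k = x := by
    intro x
    have hx : x ∈ ((H ⊔ Subgroup.zpowers (z p) : Subgroup (M p)) : Set (M p)) := by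
      rw [htop]; trivial
    rw [Subgroup.mul_normal] at hx
    obtain ⟨h, hh, w, hw, rfl⟩ := hx
    obtain ⟨k, rfl⟩ := Subgroup.mem_zpowers_iff.mp hw
    exact ⟨h, hh, k, rfl⟩
  obtain ⟨h₁, hh₁, k₁, hk₁⟩ := hmem (e p 0 1)
  obtain ⟨h₂, hh₂, k₂, hk₂⟩ := hmem (e p (1 : ZMod (p ^ 2)) 0)
  apply hz
  have hzc : ∀ (k : ℤ) (g : M p), z p ^ k * g = g * z p ^ k :=
    fun k g => (Commute.zpow_left (z_comm p g) k).eq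
  have : z p = ⁅h₁, h₂⁆ := by
    rw [z_eq_commutator p hp, ← hk₁, ← hk₂]
    exact comm_mul_central (hzc k₁) (hzc k₂) h₁ h₂
  rw [this, commutatorElement_def]
  exact H.mul_mem (H.mul_mem (H.mul_mem hh₁ hh₂) (H.inv_mem hh₁)) (H.inv_mem hh₂)


lemma card_mult_zmod : Nat.card (Multiplicative (ZMod p)) = p := by
  rw [Nat.card_congr (Multiplicative.toAdd (α := ZMod p)), Nat.card_zmod]

lemma frattini_vanish (hp : p.Prime) (g : M p) (hg : g ∈ frattini (M p)) :
    ψ p (Multiplicative.toAdd g.left) = 0 ∧ Multiplicative.toAdd g.right = 0 := by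
  have hco1 : IsCoatom (SemidirectProduct.rightHom :
      M p →* Multiplicative (ZMod p)).ker := by
    apply isCoatom_of_index_prime hp
    rw [Subgroup.index_ker, MonoidHom.range_eq_top.mpr SemidirectProduct.rightHom_surjective,
      Subgroup.card_top, card_mult_zmod]
  have hco2 : IsCoatom (pi1 p).ker := by
    apply isCoatom_of_index_prime hp
    rw [Subgroup.index_ker, MonoidHom.range_eq_top.mpr (pi1_surjective p),
      Subgroup.card_top, card_mult_zmod]
  constructor
  · have := frattini_le_coatom hco2 hg
    rw [MonoidHom.mem_ker] at this
    exact congrArg Multiplicative.toAdd this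
  · have := frattini_le_coatom hco1 hg
    rw [MonoidHom.mem_ker] at this
    exact congrArg Multiplicative.toAdd this

lemma mem_frattini (hp : p.Prime) (g : M p)
    (h1 : ψ p (Multiplicative.toAdd g.left) = 0) (h2 : Multiplicative.toAdd g.right = 0) :
    g ∈ frattini (M p) := by
  set a := Multiplicative.toAdd g.left with ha
  have hdvd : p ∣ a.val := by
    rw [psi_apply] at h1
    exact (ZMod.natCast_eq_zero_iff _ _).mp h1
  have hg : g = (z p) ^ (a.val / p) := by
    rw [z_pow]
    conv_lhs => rw [e_decomp p g]
    rw [← ha, h2]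
    apply e_eq _ _ rfl
    have h3 : (a.val / p) * p = a.val := Nat.div_mul_cancel hdvd
    have h4 : ((a.val : ℕ) : ZMod (p ^ 2)) = a := by simp [ZMod.natCast_val, ZMod.cast_id]
    have h5 : ((a.val / p : ℕ) : ZMod (p ^ 2)) * ((p : ℕ) : ZMod (p ^ 2)) = a := by
      rw [← Nat.cast_mul, h3, h4]
    exact h5.symm
  rw [hg]
  have hz : z p ∈ frattini (M p) := by
    rw [frattini, Order.radical]
    simp only [Subgroup.mem_iInf]
    intro H hH
    exact z_mem_coatom p hp.one_lt hH
  exact Subgroup.pow_mem _ hz _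

lemma isConj_of_f_eq [Fact p.Prime] {a a' : ZMod (p ^ 2)} {b : ZMod p}
    (hψ : ψ p a' = ψ p a) (hne : ¬(ψ p a = 0 ∧ b = 0)) : IsConj (e p a b) (e p a' b) := by
  have hdvd : p ∣ (a' - a).val := by
    have h0 : ψ p (a' - a) = 0 := by rw [map_sub, hψ, sub_self]
    rw [psi_apply] at h0
    exact (ZMod.natCast_eq_zero_iff _ _).mp h0
  set m : ℕ := (a' - a).val / p with hm
  have hsplit : a' = a + (p : ZMod (p ^ 2)) * ((m : ℕ) : ZMod (p ^ 2)) := by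
    have h1 : (p : ℕ) * m = (a' - a).val := Nat.mul_div_cancel' hdvd
    have h2 : ((p * m : ℕ) : ZMod (p ^ 2)) = a' - a := by
      rw [h1]; simp [ZMod.natCast_val, ZMod.cast_id]
    push_cast at h2
    linear_combination -h2
  suffices h : ∃ (c : ZMod (p ^ 2)) (d : ZMod p),
      ψ p ((d.val : ZMod (p ^ 2)) * a - (b.val : ZMod (p ^ 2)) * c)
        = ψ p ((m : ℕ) : ZMod (p ^ 2)) by
    obtain ⟨c, d, hcd⟩ := h
    rw [isConj_iff]
    refine ⟨e p c d, ?_⟩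
    rw [conj_e, p_mul_eq_of_psi_eq p hcd, ← hsplit]
  by_cases ha : ψ p a = 0
  · have hb : b ≠ 0 := fun h => hne ⟨ha, h⟩
    refine ⟨(((-(ψ p ((m : ℕ) : ZMod (p ^ 2))) * b⁻¹).val : ℕ) : ZMod (p ^ 2)), 0, ?_⟩
    rw [map_sub, map_mul, map_mul, psi_natCast, psi_natCast]
    rw [ZMod.val_zero]
    simp only [Nat.cast_zero, zero_mul, zero_sub, ZMod.natCast_val, ZMod.cast_id]
    field_simp
    rw [show ∀ x : ZMod p, ψ p (ZMod.cast x) = x from fun x => by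
      rw [ψ, ZMod.castHom_apply, ZMod.cast_cast_zmod_of_le (Nat.le_self_pow two_ne_zero p)]]
    field_simp
  · refine ⟨0, ψ p ((m : ℕ) : ZMod (p ^ 2)) * (ψ p a)⁻¹, ?_⟩
    rw [map_sub, map_mul, map_mul]
    simp only [map_zero, mul_zero, sub_zero, ZMod.natCast_val, ZMod.cast_id]
    field_simp
    rw [show ∀ x : ZMod p, ψ p (ZMod.cast x) = x from fun x => by
      rw [ψ, ZMod.castHom_apply, ZMod.cast_cast_zmod_of_le (Nat.le_self_pow two_ne_zero p)]]
    field_simp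


/-- the conjugation invariant. -/
def fmap : M p → ZMod p × ZMod p :=
  fun g => (ψ p (Multiplicative.toAdd g.left), Multiplicative.toAdd g.right)

lemma fmap_isConj {g g' : M p} (h : IsConj g g') : fmap p g = fmap p g' := by
  have h1 := hom_eq_of_isConj (pi1 p) h
  have h2 := hom_eq_of_isConj (SemidirectProduct.rightHom (φ := actionHom p)) h
  exact Prod.ext (congrArg Multiplicative.toAdd h1) (congrArg Multiplicative.toAdd h2)

end ModularP

set_option maxHeartbeats 1000000 in
open ModularP in
/-- for an odd prime `p`, the modular group `M(p)` of order `p^3` has exactly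
`p^2 - 1` conjugacy classes that are disjoint from the Frattini subgroup and closed under
taking `(p+1)`-th powers. -/
theorem card_conjClasses_modularGroup (p : ℕ) (hp : p.Prime) (hodd : Odd p) :
    Nat.card {c : ConjClasses (M p) //
      Disjoint c.carrier (frattini (M p) : Set (M p)) ∧
      ∀ x ∈ c.carrier, x ^ (p + 1) ∈ c.carrier} = p ^ 2 - 1 := by
  classical
  haveI : Fact p.Prime := ⟨hp⟩
  haveI : NeZero p := ⟨hp.pos.ne'⟩
  let Φ : ConjClasses (M p) → ZMod p × ZMod p :=
    Quotient.lift (fmap p) (fun g g' h => fmap_isConj p h)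
  have hΦ : ∀ g : M p, Φ (ConjClasses.mk g) = fmap p g := fun g => rfl
  have hfrat1 : ∀ g : M p, g ∈ frattini (M p) → fmap p g = 0 := by
    intro g hg
    obtain ⟨h1, h2⟩ := frattini_vanish p hp g hg
    exact Prod.ext h1 h2
  have hfrat2 : ∀ g : M p, fmap p g = 0 → g ∈ frattini (M p) := fun g hg =>
    mem_frattini p hp g (congrArg Prod.fst hg) (congrArg Prod.snd hg)
  have hpow : ∀ g : M p, IsConj g (g ^ (p + 1)) := isConj_pow_p_add_one p hp hodd
  set S := {c : ConjClasses (M p) //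
      Disjoint c.carrier (frattini (M p) : Set (M p)) ∧
      ∀ x ∈ c.carrier, x ^ (p + 1) ∈ c.carrier} with hS
  have hne : ∀ s : S, Φ s.1 ≠ 0 := by
    intro s h0
    obtain ⟨g, hg⟩ := ConjClasses.exists_rep s.1
    have hgc : g ∈ s.1.carrier := ConjClasses.mem_carrier_iff_mk_eq.mpr hg
    have hfz : fmap p g = 0 := by rw [← hΦ g, hg, h0]
    exact Set.disjoint_left.mp s.2.1 hgc (hfrat2 g hfz)
  let F : S → {v : ZMod p × ZMod p // v ≠ 0} := fun s => ⟨Φ s.1, hne s⟩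
  have hinj : Function.Injective F := by
    intro s t h
    have h' : Φ s.1 = Φ t.1 := congrArg Subtype.val h
    obtain ⟨g, hg⟩ := ConjClasses.exists_rep s.1
    obtain ⟨g', hg'⟩ := ConjClasses.exists_rep t.1
    have hfg : fmap p g = fmap p g' := by
      rw [← hΦ g, ← hΦ g', hg, hg']
      exact h'
    have hne0 : ¬(ψ p (Multiplicative.toAdd g.left) = 0 ∧ Multiplicative.toAdd g.right = 0) := by
      rintro ⟨u1, u2⟩
      exact hne s (by rw [← hg, hΦ]; exact Prod.ext u1 u2)
    have hψeq : ψ p (Multiplicative.toAdd g'.left) = ψ p (Multiplicative.toAdd g.left) :=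
      (congrArg Prod.fst hfg).symm
    have hbeq : Multiplicative.toAdd g'.right = Multiplicative.toAdd g.right :=
      (congrArg Prod.snd hfg).symm
    have hconj : IsConj g g' := by
      rw [e_decomp p g, e_decomp p g', hbeq]
      exact isConj_of_f_eq p hψeq hne0
    apply Subtype.ext
    rw [← hg, ← hg', ConjClasses.mk_eq_mk_iff_isConj]
    exact hconj
  have hsurj : Function.Surjective F := by
    rintro ⟨v, hv⟩
    have hfg : fmap p (e p ((v.1.val : ℕ) : ZMod (p ^ 2)) v.2) = v := by
      refine Prod.ext ?_ rfl
      show ψ p ((v.1.val : ℕ) : ZMod (p ^ 2)) = v.1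
      rw [psi_natCast]
      simp [ZMod.natCast_val, ZMod.cast_id]
    set g : M p := e p ((v.1.val : ℕ) : ZMod (p ^ 2)) v.2 with hgdef
    refine ⟨⟨ConjClasses.mk g, ?_, ?_⟩, ?_⟩
    · rw [Set.disjoint_left]
      intro x hx hxf
      rw [ConjClasses.mem_carrier_iff_mk_eq] at hx
      have h1 : fmap p x = fmap p g :=
        fmap_isConj p (ConjClasses.mk_eq_mk_iff_isConj.mp (hx.trans rfl))
      have h0 := hfrat1 x hxf
      rw [h1, hfg] at h0
      exact hv h0
    · intro x hx
      rw [ConjClasses.mem_carrier_iff_mk_eq] at hx ⊢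
      rw [← hx]
      exact (ConjClasses.mk_eq_mk_iff_isConj.mpr (hpow x)).symm
    · apply Subtype.ext
      show Φ (ConjClasses.mk g) = v
      rw [hΦ, hfg]
  have hcard := Nat.card_congr (Equiv.ofBijective F ⟨hinj, hsurj⟩)
  rw [hcard, Nat.card_eq_fintype_card]
  have hcompl : Fintype.card {v : ZMod p × ZMod p // v ≠ 0}
      = Fintype.card (ZMod p × ZMod p) - Fintype.card {v : ZMod p × ZMod p // v = 0} :=
    Fintype.card_subtype_compl _
  rw [hcompl, Fintype.card_subtype_eq, Fintype.card_prod, ZMod.card, pow_two]
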